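/- arXiv:math/0508335 — 2 statements merged into one kernel-verified Lean document; each statement's English description precedes it below -/
import Mathlib

section
/- Orthonormality-type completeness identity for the star-graph scattering states: for ω > 0, α > 0, N ≥ 1, and x, y ∈ ℝ, (1/(2π)) ∑_{l=1}^N ψ_j^l(x) · conj(ψ_{j'}^l(y)) = (2/π) δ_{jj'} sin(ωx) sin(ωy) + (2/π)(α² + N²ω²)⁻¹ { Nω² cos(ω(x+y)) + αω sin(ω(x+y)) }, where ψ_j^l(x) = −2i δ_j^l sin(ωx) + 2ω (Nω − iα)/(α² + N²ω²) e^{iωx}. -/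
set_option maxHeartbeats 2000000


open Complex Real

/-- Completeness/orthonormality identity for the star-graph scattering states:
`(1/(2π)) ∑_l ψ_j^l(x) conj(ψ_{j'}^l(y))` equals the spectral projection kernel
`(2/π) δ_{jj'} sin(ωx) sin(ωy) + (2/(π(α²+N²ω²)))(Nω² cos(ω(x+y)) + αω sin(ω(x+y)))`. -/
theorem scattering_states_completeness (N : ℕ) (hN : 1 ≤ N) (α ω : ℝ)
    (hα : 0 < α) (hω : 0 < ω) (j j' : Fin N) (x y : ℝ)
    (ψ : Fin N → Fin N → ℝ → ℂ)
    (hψ : ∀ j l z, ψ j l z =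
      -2 * Complex.I * (if j = l then 1 else 0) * (Real.sin (ω * z) : ℂ)
      + 2 * (ω : ℂ) * ((N : ℂ) * ω - Complex.I * α)
          / ((α : ℂ) ^ 2 + (N : ℂ) ^ 2 * (ω : ℂ) ^ 2)
        * Complex.exp (Complex.I * ω * z)) :
    (1 / (2 * (π : ℂ))) * ∑ l, ψ j l x * (starRingEnd ℂ) (ψ j' l y)
      = (2 / (π : ℂ)) * (if j = j' then 1 else 0)
          * (Real.sin (ω * x) : ℂ) * (Real.sin (ω * y) : ℂ)
        + (2 / ((π : ℂ) * ((α : ℂ) ^ 2 + (N : ℂ) ^ 2 * (ω : ℂ) ^ 2)))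
          * ((N : ℂ) * (ω : ℂ) ^ 2 * (Real.cos (ω * (x + y)) : ℂ)
            + (α : ℂ) * (ω : ℂ) * (Real.sin (ω * (x + y)) : ℂ)) := by
  have hD : ((α : ℂ) ^ 2 + (N : ℂ) ^ 2 * (ω : ℂ) ^ 2) ≠ 0 := by
    have h : ((α : ℂ) ^ 2 + (N : ℂ) ^ 2 * (ω : ℂ) ^ 2) = ((α ^ 2 + (N:ℝ) ^ 2 * ω ^ 2 : ℝ) : ℂ) := by
      push_cast; ring
    rw [h]
    have : (0:ℝ) < α ^ 2 + (N:ℝ) ^ 2 * ω ^ 2 := by positivity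
    exact_mod_cast this.ne'
  have hπ : (π : ℂ) ≠ 0 := by exact_mod_cast Real.pi_ne_zero
  set D : ℂ := (α : ℂ) ^ 2 + (N : ℂ) ^ 2 * (ω : ℂ) ^ 2 with hDdef
  set c : ℂ := 2 * (ω : ℂ) * ((N : ℂ) * ω - Complex.I * α) / D with hc
  set cb : ℂ := 2 * (ω : ℂ) * ((N : ℂ) * ω + Complex.I * α) / D with hcb
  have hDconj : (starRingEnd ℂ) D = D := by
    rw [hDdef]
    simp only [map_add, map_mul, map_pow, Complex.conj_ofReal, Complex.conj_natCast]
  have hconjψ : ∀ l, (starRingEnd ℂ) (ψ j' l y) =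
      2 * Complex.I * (if j' = l then 1 else 0) * (Real.sin (ω * y) : ℂ)
      + cb * Complex.exp (-(Complex.I * ω * y)) := by
    intro l
    rw [hψ, hc, hcb]
    simp only [map_add, map_mul, map_div₀, map_sub, map_neg, map_ofNat,
      apply_ite (starRingEnd ℂ), map_one, map_zero, Complex.conj_I,
      Complex.conj_ofReal, Complex.conj_natCast, ← Complex.exp_conj, hDconj]
    ring_nf
  have key : ∀ l : Fin N, ψ j l x * (starRingEnd ℂ) (ψ j' l y) =
      (if j = l then 1 else 0) * (if j' = l then 1 else 0)
        * (4 * (Real.sin (ω * x) : ℂ) * (Real.sin (ω * y) : ℂ))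
      + (if j = l then 1 else 0) *
          (-2 * Complex.I * (Real.sin (ω * x) : ℂ) * cb * Complex.exp (-(Complex.I * ω * y)))
      + (if j' = l then 1 else 0) *
          (2 * Complex.I * (Real.sin (ω * y) : ℂ) * c * Complex.exp (Complex.I * ω * x))
      + c * cb * Complex.exp (Complex.I * ω * x) * Complex.exp (-(Complex.I * ω * y)) := by
    intro l
    rw [hψ, hconjψ]
    linear_combination (-4 * (if j = l then (1:ℂ) else 0) * (if j' = l then 1 else 0)
      * (Real.sin (ω * x) : ℂ) * (Real.sin (ω * y) : ℂ)) * Complex.I_sq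
  rw [Finset.sum_congr rfl fun l _ => key l]
  rw [Finset.sum_add_distrib, Finset.sum_add_distrib, Finset.sum_add_distrib]
  have h1 : ∑ l : Fin N, ((if j = l then (1:ℂ) else 0) * (if j' = l then 1 else 0)
        * (4 * (Real.sin (ω * x) : ℂ) * (Real.sin (ω * y) : ℂ)))
      = (if j = j' then 1 else 0) * (4 * (Real.sin (ω * x) : ℂ) * (Real.sin (ω * y) : ℂ)) := by
    rw [← Finset.sum_mul]
    congr 1
    have h : ∀ l : Fin N, (if j = l then (1:ℂ) else 0) * (if j' = l then 1 else 0)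
        = if l = j then (if j' = l then (1:ℂ) else 0) else 0 := by
      intro l
      rcases eq_or_ne j l with rfl | hjl
      · simp
      · simp [hjl, Ne.symm hjl]
    rw [Finset.sum_congr rfl fun l _ => h l, Finset.sum_ite_eq']
    simp only [Finset.mem_univ, if_true]
    rcases eq_or_ne j j' with rfl | hjj
    · simp
    · simp [hjj, Ne.symm hjj]
  have h2 : ∑ l : Fin N, ((if j = l then (1:ℂ) else 0) *
        (-2 * Complex.I * (Real.sin (ω * x) : ℂ) * cb * Complex.exp (-(Complex.I * ω * y))))
      = -2 * Complex.I * (Real.sin (ω * x) : ℂ) * cb * Complex.exp (-(Complex.I * ω * y)) := by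
    rw [← Finset.sum_mul]
    simp
  have h3 : ∑ l : Fin N, ((if j' = l then (1:ℂ) else 0) *
        (2 * Complex.I * (Real.sin (ω * y) : ℂ) * c * Complex.exp (Complex.I * ω * x)))
      = 2 * Complex.I * (Real.sin (ω * y) : ℂ) * c * Complex.exp (Complex.I * ω * x) := by
    rw [← Finset.sum_mul]
    simp
  rw [h1, h2, h3, Finset.sum_const, Finset.card_univ, Fintype.card_fin, nsmul_eq_mul]
  -- now pure complex algebra
  have hex : ∀ z : ℝ, Complex.exp (Complex.I * ω * z)
      = (Real.cos (ω * z) : ℂ) + (Real.sin (ω * z) : ℂ) * Complex.I := by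
    intro z
    rw [show Complex.I * (ω:ℂ) * (z:ℂ) = ((ω * z : ℝ) : ℂ) * Complex.I by push_cast; ring,
      Complex.exp_mul_I]
    norm_cast
  have hex' : Complex.exp (-(Complex.I * ω * y))
      = (Real.cos (ω * y) : ℂ) - (Real.sin (ω * y) : ℂ) * Complex.I := by
    rw [show -(Complex.I * (ω:ℂ) * (y:ℂ)) = ((-(ω * y) : ℝ) : ℂ) * Complex.I by push_cast; ring,
      Complex.exp_mul_I]
    push_cast [Real.cos_neg, Real.sin_neg]
    rw [Complex.cos_neg, Complex.sin_neg]
    ring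
  rw [hex x, hex', hc, hcb, hDdef]
  rw [show ω * (x + y) = ω * x + ω * y by ring, Real.cos_add, Real.sin_add]
  push_cast
  have hI2 : Complex.I ^ 2 = -1 := Complex.I_sq
  have hI3 : Complex.I ^ 3 = -Complex.I := by rw [pow_succ, hI2]; ring
  have hI4 : Complex.I ^ 4 = 1 := by rw [show (4:ℕ) = 2*2 from rfl, pow_mul, hI2]; ring
  have hDC : ((α:ℂ) ^ 2 + (N:ℂ) ^ 2 * (ω:ℂ) ^ 2) ≠ 0 := hD
  have hDC' : ((α:ℂ) ^ 2 + (ω:ℂ) ^ 2 * (N:ℂ) ^ 2) ≠ 0 := by rw [mul_comm]; exact hD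
  rcases eq_or_ne j j' with rfl | hjj
  · simp only [if_pos rfl]
    field_simp
    ring_nf
    simp only [hI2, hI3, hI4]
    ring
  · simp only [if_neg hjj]
    field_simp
    ring_nf
    simp only [hI2, hI3, hI4]
    ring
end

section
/- Large-distance Dirichlet limit of the star-graph vacuum energy density: for N ≥ 1 and α > 0, T₀₀(x) = (1 − 2/N)/(8πx²) + α/(2πN²x) + (α²/(πN³)) e^{2αx/N} Ei(−2αx/N) satisfies lim_{x→∞} 8πx²·T₀₀(x) = 1; i.e., T₀₀(x) ~ 1/(8πx²) as x → ∞. -/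
open Real Filter MeasureTheory

/-- Integrability of `exp(-s)/s^k` on `(y,∞)` for `y > 0`. -/
lemma int_exp_pow_inv (y : ℝ) (hy : 0 < y) (k : ℕ) :
    IntegrableOn (fun s : ℝ => Real.exp (-s) * (s ^ k)⁻¹) (Set.Ioi y) := by
  apply Integrable.mono' (((exp_neg_integrableOn_Ioi y one_pos)).const_mul ((y ^ k)⁻¹))
  · exact ((Real.measurable_exp.comp measurable_neg).mul
      ((measurable_id.pow_const k).inv)).aestronglyMeasurable
  · filter_upwards [ae_restrict_mem measurableSet_Ioi] with s hs
    have hsy : y < s := hs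
    have h1 : (0:ℝ) < s := hy.trans hsy
    have h2 : (s ^ k)⁻¹ ≤ (y ^ k)⁻¹ := by
      apply inv_anti₀ (pow_pos hy k)
      exact pow_le_pow_left₀ hy.le hsy.le k
    rw [Real.norm_eq_abs, abs_mul, abs_of_pos (Real.exp_pos _),
      abs_of_pos (inv_pos.mpr (pow_pos h1 k))]
    calc Real.exp (-s) * (s ^ k)⁻¹ ≤ Real.exp (-s) * (y ^ k)⁻¹ := by
          exact mul_le_mul_of_nonneg_left h2 (Real.exp_pos _).le
      _ = (y ^ k)⁻¹ * Real.exp (-1 * s) := by rw [neg_one_mul]; ring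

lemma deriv_aux (a b c : ℝ) {s : ℝ} (hs : s ≠ 0) :
    HasDerivAt (fun t : ℝ => -(Real.exp (-t) * (a * t⁻¹ + b * (t^2)⁻¹ + c * (t^3)⁻¹)))
      (Real.exp (-s) * (a * s⁻¹ + (a+b) * (s^2)⁻¹ + (2*b+c) * (s^3)⁻¹ + 3*c * (s^4)⁻¹)) s := by
  have he : HasDerivAt (fun t : ℝ => Real.exp (-t)) (-Real.exp (-s)) s := by
    exact ((Real.hasDerivAt_exp (-s)).comp s ((hasDerivAt_id s).neg)).congr_deriv (by simp)
  have h1 : HasDerivAt (fun t : ℝ => t⁻¹) (-((s^2)⁻¹)) s := by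
    simpa using hasDerivAt_inv hs
  have h2 : HasDerivAt (fun t : ℝ => (t^2)⁻¹) (-(2*s) / (s^2)^2) s :=
    (hasDerivAt_pow 2 s).inv (pow_ne_zero _ hs) |>.congr_deriv (by ring_nf)
  have h3 : HasDerivAt (fun t : ℝ => (t^3)⁻¹) (-(3*s^2) / (s^3)^2) s :=
    (hasDerivAt_pow 3 s).inv (pow_ne_zero _ hs) |>.congr_deriv (by ring_nf)
  have hin : HasDerivAt (fun t : ℝ => a * t⁻¹ + b * (t^2)⁻¹ + c * (t^3)⁻¹)
      (a * (-((s^2)⁻¹)) + b * (-(2*s) / (s^2)^2) + c * (-(3*s^2) / (s^3)^2)) s :=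
    ((h1.const_mul a).add (h2.const_mul b)).add (h3.const_mul c)
  have := (he.mul hin).neg
  refine this.congr_deriv ?_
  have h2' : (s:ℝ)^2 ≠ 0 := pow_ne_zero _ hs
  field_simp
  ring

set_option maxHeartbeats 800000 in
lemma ftc3 (a b c y : ℝ) (hy : 0 < y) :
    ∫ s in Set.Ioi y,
        Real.exp (-s) * (a * s⁻¹ + (a+b) * (s^2)⁻¹ + (2*b+c) * (s^3)⁻¹ + 3*c * (s^4)⁻¹)
      = Real.exp (-y) * (a * y⁻¹ + b * (y^2)⁻¹ + c * (y^3)⁻¹) := by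
  have hint : IntegrableOn
      (fun s : ℝ => Real.exp (-s) * (a * s⁻¹ + (a+b) * (s^2)⁻¹ + (2*b+c) * (s^3)⁻¹ + 3*c * (s^4)⁻¹))
      (Set.Ioi y) := by
    have h1 := (int_exp_pow_inv y hy 1).const_mul a
    have h2 := (int_exp_pow_inv y hy 2).const_mul (a+b)
    have h3 := (int_exp_pow_inv y hy 3).const_mul (2*b+c)
    have h4 := (int_exp_pow_inv y hy 4).const_mul (3*c)
    have := ((h1.add h2).add h3).add h4
    refine this.congr (Filter.Eventually.of_forall fun s => ?_)
    simp only [Pi.add_apply, pow_one]; ring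
  have htend : Tendsto (fun t : ℝ => -(Real.exp (-t) * (a * t⁻¹ + b * (t^2)⁻¹ + c * (t^3)⁻¹)))
      atTop (nhds 0) := by
    have he : Tendsto (fun t : ℝ => Real.exp (-t)) atTop (nhds 0) :=
      Real.tendsto_exp_neg_atTop_nhds_zero
    have hp : Tendsto (fun t : ℝ => a * t⁻¹ + b * (t^2)⁻¹ + c * (t^3)⁻¹) atTop
        (nhds (a * 0 + b * 0 + c * 0)) :=
      (((tendsto_inv_atTop_zero).const_mul a).add
        (((tendsto_pow_atTop (by norm_num : 2 ≠ 0)).inv_tendsto_atTop).const_mul b)).add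
        (((tendsto_pow_atTop (by norm_num : 3 ≠ 0)).inv_tendsto_atTop).const_mul c)
    have := (he.mul hp).neg
    simpa using this
  have := integral_Ioi_of_hasDerivAt_of_tendsto'
    (f := fun t : ℝ => -(Real.exp (-t) * (a * t⁻¹ + b * (t^2)⁻¹ + c * (t^3)⁻¹)))
    (fun s hs => deriv_aux a b c (ne_of_gt (hy.trans_le hs))) hint htend
  rw [this]; ring

lemma intc (a b c y : ℝ) (hy : 0 < y) :
    IntegrableOn
      (fun s : ℝ => Real.exp (-s) * (a * s⁻¹ + (a+b) * (s^2)⁻¹ + (2*b+c) * (s^3)⁻¹ + 3*c * (s^4)⁻¹))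
      (Set.Ioi y) := by
  have h1 := (int_exp_pow_inv y hy 1).const_mul a
  have h2 := (int_exp_pow_inv y hy 2).const_mul (a+b)
  have h3 := (int_exp_pow_inv y hy 3).const_mul (2*b+c)
  have h4 := (int_exp_pow_inv y hy 4).const_mul (3*c)
  have := ((h1.add h2).add h3).add h4
  refine this.congr (Filter.Eventually.of_forall fun s => ?_)
  simp only [Pi.add_apply, pow_one]; ring

lemma I_int (y : ℝ) (hy : 0 < y) :
    IntegrableOn (fun s : ℝ => Real.exp (-s) / s) (Set.Ioi y) := by
  refine (int_exp_pow_inv y hy 1).congr (Filter.Eventually.of_forall fun s => ?_)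
  simp [div_eq_mul_inv]

lemma I_lower (y : ℝ) (hy : 0 < y) :
    Real.exp (-y) * (y⁻¹ - (y^2)⁻¹) ≤ ∫ s in Set.Ioi y, Real.exp (-s) / s := by
  have key := ftc3 1 (-1) 0 y hy
  have hmono : (∫ s in Set.Ioi y,
      Real.exp (-s) * (1 * s⁻¹ + (1+(-1)) * (s^2)⁻¹ + (2*(-1)+0) * (s^3)⁻¹ + 3*0 * (s^4)⁻¹))
      ≤ ∫ s in Set.Ioi y, Real.exp (-s) / s := by
    refine setIntegral_mono_on (intc 1 (-1) 0 y hy) (I_int y hy) measurableSet_Ioi ?_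
    intro s hs
    have hs0 : (0:ℝ) < s := hy.trans hs
    have h3 : (0:ℝ) < (s^3)⁻¹ := inv_pos.mpr (pow_pos hs0 3)
    have he : (0:ℝ) < Real.exp (-s) := Real.exp_pos _
    rw [div_eq_mul_inv]
    nlinarith [mul_pos he h3]
  calc Real.exp (-y) * (y⁻¹ - (y^2)⁻¹)
      = Real.exp (-y) * (1 * y⁻¹ + (-1) * (y^2)⁻¹ + 0 * (y^3)⁻¹) := by ring
    _ ≤ _ := by rw [← key]; exact hmono

lemma I_upper (y : ℝ) (hy : 0 < y) :
    (∫ s in Set.Ioi y, Real.exp (-s) / s) ≤ Real.exp (-y) * (y⁻¹ - (y^2)⁻¹ + 2*(y^3)⁻¹) := by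
  have key := ftc3 1 (-1) 2 y hy
  have hmono : (∫ s in Set.Ioi y, Real.exp (-s) / s)
      ≤ ∫ s in Set.Ioi y,
        Real.exp (-s) * (1 * s⁻¹ + (1+(-1)) * (s^2)⁻¹ + (2*(-1)+2) * (s^3)⁻¹ + 3*2 * (s^4)⁻¹) := by
    refine setIntegral_mono_on (I_int y hy) (intc 1 (-1) 2 y hy) measurableSet_Ioi ?_
    intro s hs
    have hs0 : (0:ℝ) < s := hy.trans hs
    have h4 : (0:ℝ) < (s^4)⁻¹ := inv_pos.mpr (pow_pos hs0 4)
    have he : (0:ℝ) < Real.exp (-s) := Real.exp_pos _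
    rw [div_eq_mul_inv]
    nlinarith [mul_pos he h4]
  calc (∫ s in Set.Ioi y, Real.exp (-s) / s) ≤ _ := hmono
    _ = Real.exp (-y) * (y⁻¹ - (y^2)⁻¹ + 2*(y^3)⁻¹) := by rw [key]; ring

lemma glim (Ei : ℝ → ℝ)
    (hEi : ∀ y : ℝ, 0 < y → Ei (-y) = -∫ s in Set.Ioi y, Real.exp (-s) / s) :
    Tendsto (fun y : ℝ => y + y^2 * Real.exp y * Ei (-y)) atTop (nhds 1) := by
  have hbound : ∀ y : ℝ, 1 ≤ y →
      (1 - 2/y ≤ y + y^2 * Real.exp y * Ei (-y) ∧ y + y^2 * Real.exp y * Ei (-y) ≤ 1) := by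
    intro y hy
    have hy0 : (0:ℝ) < y := lt_of_lt_of_le one_pos hy
    have hy0' : y ≠ 0 := hy0.ne'
    have hI1 := I_lower y hy0
    have hI2 := I_upper y hy0
    rw [hEi y hy0]
    set I := ∫ s in Set.Ioi y, Real.exp (-s) / s with hIdef
    have hEpos : (0:ℝ) < y^2 * Real.exp y := by positivity
    have e1 : y^2 * Real.exp y * (Real.exp (-y) * (y⁻¹ - (y^2)⁻¹)) = y - 1 := by
      rw [Real.exp_neg]
      have hE : Real.exp y ≠ 0 := (Real.exp_pos y).ne'
      field_simp
    have e2 : y^2 * Real.exp y * (Real.exp (-y) * (y⁻¹ - (y^2)⁻¹ + 2*(y^3)⁻¹)) = y - 1 + 2/y := by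
      rw [Real.exp_neg]
      have hE : Real.exp y ≠ 0 := (Real.exp_pos y).ne'
      field_simp
    have m1 : y - 1 ≤ y^2 * Real.exp y * I := by
      rw [← e1]; exact mul_le_mul_of_nonneg_left hI1 hEpos.le
    have m2 : y^2 * Real.exp y * I ≤ y - 1 + 2/y := by
      rw [← e2]; exact mul_le_mul_of_nonneg_left hI2 hEpos.le
    constructor <;> nlinarith
  have hlow : Tendsto (fun y : ℝ => 1 - 2/y) atTop (nhds 1) := by
    have : Tendsto (fun y : ℝ => 2/y) atTop (nhds 0) := by
      simpa [div_eq_mul_inv] using (tendsto_inv_atTop_zero (𝕜 := ℝ)).const_mul 2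
    simpa using tendsto_const_nhds.sub this
  refine tendsto_of_tendsto_of_tendsto_of_le_of_le' hlow tendsto_const_nhds ?_ ?_
  · filter_upwards [eventually_ge_atTop (1:ℝ)] with y hy using (hbound y hy).1
  · filter_upwards [eventually_ge_atTop (1:ℝ)] with y hy using (hbound y hy).2

/-- Large-distance Dirichlet limit of the star-graph vacuum energy density:
`8πx² T₀₀(x) → 1` as `x → ∞`, where
`T₀₀(x) = (1 − 2/N)/(8πx²) + α/(2πN²x) + (α²/(πN³)) e^{2αx/N} Ei(−2αx/N)`
with `Ei(−y) = −∫_y^∞ e^{−s}/s ds`. -/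

theorem vacuum_energy_far_limit (N : ℕ) (hN : 1 ≤ N) (α : ℝ) (hα : 0 < α)
    (Ei : ℝ → ℝ)
    (hEi : ∀ y : ℝ, 0 < y → Ei (-y) = -∫ s in Set.Ioi y, Real.exp (-s) / s)
    (T00 : ℝ → ℝ)
    (hT : ∀ x : ℝ, 0 < x → T00 x =
      (1 - 2 / (N : ℝ)) / (8 * π * x ^ 2) + α / (2 * π * (N : ℝ) ^ 2 * x)
      + (α ^ 2 / (π * (N : ℝ) ^ 3)) * Real.exp (2 * α * x / N) * Ei (-(2 * α * x / N))) :
    Tendsto (fun x : ℝ => 8 * π * x ^ 2 * T00 x) atTop (nhds 1) := by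
  have hN0 : (0:ℝ) < (N:ℝ) := by exact_mod_cast hN
  have hN0' : (N:ℝ) ≠ 0 := hN0.ne'
  have hcomp : Tendsto (fun x : ℝ => 2 * α * x / N) atTop atTop := by
    have hc : (0:ℝ) < 2 * α / N := by positivity
    have := Tendsto.const_mul_atTop hc (tendsto_id (α := ℝ) (x := atTop))
    refine this.congr fun x => ?_
    simp only [id_eq]; ring
  have hg := (glim Ei hEi).comp hcomp
  have hmain : Tendsto
      (fun x : ℝ => (1 - 2/(N:ℝ)) + (2/(N:ℝ)) *
        ((2*α*x/N) + (2*α*x/N)^2 * Real.exp (2*α*x/N) * Ei (-(2*α*x/N))))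
      atTop (nhds 1) := by
    have := (tendsto_const_nhds (x := (1 - 2/(N:ℝ))) (f := atTop)).add (hg.const_mul (2/(N:ℝ)))
    have h1 : (1 - 2/(N:ℝ)) + (2/(N:ℝ)) * 1 = 1 := by ring
    rw [h1] at this
    exact this
  refine hmain.congr' ?_
  filter_upwards [eventually_gt_atTop (0:ℝ)] with x hx
  rw [hT x hx]
  have hπ : π ≠ 0 := Real.pi_ne_zero
  have hx' : x ≠ 0 := hx.ne'
  field_simp
  ring
end
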